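/- For b ≥ 1, k ≥ 1 and n ≥ k, the identity Σ [binom(2h_{k+1},h_{k+1})⋯binom(2h_{k+b},h_{k+b})] / [h_1 ⋯ h_k · 4^{h_{k+1}+⋯+h_{k+b}}] = (k!/n!) · c_{b/2}(n+b/2, k+b/2) holds, where the sum is over all h_1,…,h_k ∈ ℕ_{≥1} and h_{k+1},…,h_{k+b} ∈ ℕ_{≥0} with h_1+⋯+h_{k+b} = n, and c_{b/2}(n+b/2,k+b/2) := Σ_{m=0}^{n−k} binom(n,m) c(n−m,k) (b/2)^{(m)} with c the unsigned Stirling number of the first kind and (b/2)^{(m)} the rising factorial. -/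

import Mathlib

open PowerSeries Finset

/-- The unsigned Stirling numbers of the first kind. -/
def stirling1 : ℕ → ℕ → ℕ
  | 0, 0 => 1
  | 0, _ + 1 => 0
  | _ + 1, 0 => 0
  | n + 1, k + 1 => n * stirling1 n (k + 1) + stirling1 n k

lemma stirling1_eq_zero_of_lt : ∀ {n k : ℕ}, n < k → stirling1 n k = 0
  | 0, _ + 1, _ => rfl
  | n + 1, k + 1, h => by
    have h1 : stirling1 n (k + 1) = 0 := stirling1_eq_zero_of_lt (by omega)
    have h2 : stirling1 n k = 0 := stirling1_eq_zero_of_lt (by omega)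
    show n * stirling1 n (k + 1) + stirling1 n k = 0
    rw [h1, h2]; ring

noncomputable def Lser : ℚ⟦X⟧ := PowerSeries.mk fun h => (h : ℚ)⁻¹
noncomputable def Gser : ℚ⟦X⟧ := PowerSeries.mk fun h => ((2 * h).choose h : ℚ) / 4 ^ h


lemma coeff_X_mul_derivative (f : ℚ⟦X⟧) (n : ℕ) :
    (PowerSeries.coeff n) (X * d⁄dX ℚ f) = (PowerSeries.coeff n) f * n := by
  cases n with
  | zero => simp
  | succ m => rw [coeff_succ_X_mul, PowerSeries.coeff_derivative]; push_cast; ring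

lemma LD : (1 - X) * d⁄dX ℚ Lser = 1 := by
  have h : (1 - X) * d⁄dX ℚ Lser = d⁄dX ℚ Lser - X * d⁄dX ℚ Lser := by ring
  rw [h]
  ext n
  rw [map_sub, PowerSeries.coeff_derivative, coeff_X_mul_derivative]
  simp only [Lser, coeff_mk, PowerSeries.coeff_one]
  cases n with
  | zero => norm_num
  | succ m =>
    have h1 : ((m : ℚ) + 1) ≠ 0 := by positivity
    have h2 : ((m : ℚ) + 1 + 1) ≠ 0 := by positivity
    push_cast
    field_simp
    simp

lemma GD : (1 - X) * d⁄dX ℚ Gser = PowerSeries.C (1/2) * Gser := by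
  have h : (1 - X) * d⁄dX ℚ Gser = d⁄dX ℚ Gser - X * d⁄dX ℚ Gser := by ring
  rw [h]
  ext n
  rw [map_sub, PowerSeries.coeff_derivative, coeff_X_mul_derivative, PowerSeries.coeff_C_mul]
  simp only [Gser, coeff_mk]
  have hcq : ((n:ℚ) + 1) * ((2 * (n+1)).choose (n+1) : ℚ)
      = 2 * (2 * n + 1) * ((2 * n).choose n : ℚ) := by
    exact_mod_cast Nat.succ_mul_centralBinom_succ n
  have h4n : (4:ℚ) ^ n ≠ 0 := by positivity
  have hn1 : ((n:ℚ) + 1) ≠ 0 := by positivity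
  rw [pow_succ]
  field_simp
  ring_nf
  ring_nf at hcq
  linear_combination 2 * hcq

lemma coeff_Lpow : ∀ (k n : ℕ),
    PowerSeries.coeff n (Lser ^ k) = k.factorial * stirling1 n k / n.factorial := by
  intro k
  induction k with
  | zero =>
    intro n
    cases n with
    | zero => simp [stirling1]
    | succ m => simp [stirling1, PowerSeries.coeff_one]
  | succ k ih =>
    have key : ∀ n : ℕ, PowerSeries.coeff (n+1) (Lser^(k+1)) * (n+1)
        = PowerSeries.coeff n (Lser^(k+1)) * n
          + ((k:ℚ)+1) * PowerSeries.coeff n (Lser^k) := by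
      intro n
      have hd : (1 - X) * d⁄dX ℚ (Lser ^ (k+1)) = ((k:ℚ⟦X⟧)+1) * Lser ^ k := by
        rw [Derivation.leibniz_pow]
        simp only [smul_eq_mul, nsmul_eq_mul, Nat.add_sub_cancel]
        push_cast
        linear_combination ((k:ℚ⟦X⟧)+1) * Lser^k * LD
      have h2 := congrArg (PowerSeries.coeff n) hd
      rw [show (1 - X) * d⁄dX ℚ (Lser ^ (k+1))
          = d⁄dX ℚ (Lser^(k+1)) - X * d⁄dX ℚ (Lser^(k+1)) from by ring] at h2
      rw [map_sub, PowerSeries.coeff_derivative, coeff_X_mul_derivative] at h2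
      have h3 : PowerSeries.coeff n (((k:ℚ⟦X⟧)+1) * Lser ^ k)
          = ((k:ℚ)+1) * PowerSeries.coeff n (Lser ^ k) := by
        have : ((k:ℚ⟦X⟧)+1) = PowerSeries.C ((k:ℚ)+1) := by
          rw [map_add, map_one, map_natCast]
        rw [this, PowerSeries.coeff_C_mul]
      rw [h3] at h2
      linarith [h2]
    intro n
    induction n with
    | zero =>
      rw [PowerSeries.coeff_zero_eq_constantCoeff, map_pow]
      have : constantCoeff Lser = 0 := by
        simp [Lser, ← PowerSeries.coeff_zero_eq_constantCoeff]
      rw [this, zero_pow (Nat.succ_ne_zero k)]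
      simp [stirling1]
    | succ n ihn =>
      have hkey := key n
      rw [ihn, ih n] at hkey
      have hS : (stirling1 (n+1) (k+1) : ℚ)
          = n * stirling1 n (k+1) + stirling1 n k := by
        rw [show stirling1 (n+1) (k+1) = n * stirling1 n (k+1) + stirling1 n k from rfl]
        push_cast; ring
      have hfacn : ((n+1).factorial : ℚ) = ((n:ℚ)+1) * n.factorial := by
        rw [Nat.factorial_succ]; push_cast; ring
      have hfack : ((k+1).factorial : ℚ) = ((k:ℚ)+1) * k.factorial := by
        rw [Nat.factorial_succ]; push_cast; ring
      have hn0 : (n.factorial : ℚ) ≠ 0 := by positivity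
      have hn1 : ((n:ℚ)+1) ≠ 0 := by positivity
      rw [hfack] at hkey
      rw [hfacn, hfack, hS]
      field_simp at hkey ⊢
      linear_combination hkey

lemma coeff_Gpow : ∀ (b m : ℕ),
    PowerSeries.coeff m (Gser ^ b) = (∏ i ∈ range m, ((b:ℚ)/2 + i)) / m.factorial := by
  intro b
  cases b with
  | zero =>
    intro m
    cases m with
    | zero => simp
    | succ m =>
      rw [Finset.prod_range_succ']
      simp [PowerSeries.coeff_one]
  | succ b =>
    have key : ∀ m : ℕ, PowerSeries.coeff (m+1) (Gser^(b+1)) * (m+1)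
        = PowerSeries.coeff m (Gser^(b+1)) * m
          + (((b:ℚ)+1)/2) * PowerSeries.coeff m (Gser^(b+1)) := by
      intro m
      have hd : (1 - X) * d⁄dX ℚ (Gser ^ (b+1))
          = PowerSeries.C (((b:ℚ)+1)/2) * Gser ^ (b+1) := by
        have hC : PowerSeries.C (((b:ℚ)+1)/2) = ((b:ℚ⟦X⟧)+1) * PowerSeries.C (1/2) := by
          rw [show ((b:ℚ)+1)/2 = ((b:ℚ)+1) * (1/2) from by ring, map_mul, map_add, map_one,
            map_natCast]
        rw [hC, Derivation.leibniz_pow]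
        simp only [smul_eq_mul, nsmul_eq_mul, Nat.add_sub_cancel]
        push_cast
        linear_combination ((b:ℚ⟦X⟧)+1) * Gser^b * GD
      have h2 := congrArg (PowerSeries.coeff m) hd
      rw [show (1 - X) * d⁄dX ℚ (Gser ^ (b+1))
          = d⁄dX ℚ (Gser^(b+1)) - X * d⁄dX ℚ (Gser^(b+1)) from by ring] at h2
      rw [map_sub, PowerSeries.coeff_derivative, coeff_X_mul_derivative,
        PowerSeries.coeff_C_mul] at h2
      linarith [h2]
    intro m
    induction m with
    | zero =>
      rw [PowerSeries.coeff_zero_eq_constantCoeff, map_pow]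
      have : constantCoeff Gser = 1 := by
        simp [Gser, ← PowerSeries.coeff_zero_eq_constantCoeff]
      rw [this, one_pow]
      simp
    | succ m ihm =>
      have hfacm : ((m+1).factorial : ℚ) = ((m:ℚ)+1) * m.factorial := by
        rw [Nat.factorial_succ]; push_cast; ring
      have hm0 : (m.factorial : ℚ) ≠ 0 := by positivity
      have hm1 : ((m:ℚ)+1) ≠ 0 := by positivity
      have ihm' : PowerSeries.coeff m (Gser^(b+1)) * m.factorial
          = ∏ i ∈ range m, ((((b:ℕ)+1:ℕ):ℚ)/2 + i) := by
        rw [ihm]; field_simp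
      have hkey2 : PowerSeries.coeff (m+1) (Gser^(b+1)) * (((m:ℚ)+1) * m.factorial)
          = (∏ i ∈ range m, ((((b:ℕ)+1:ℕ):ℚ)/2 + i)) * m
            + (((b:ℚ)+1)/2) * ∏ i ∈ range m, ((((b:ℕ)+1:ℕ):ℚ)/2 + i) := by
        linear_combination (m.factorial:ℚ) * key m + ((m:ℚ) + ((b:ℚ)+1)/2) * ihm'
      rw [Finset.prod_range_succ, hfacm,
        eq_div_iff (show ((m:ℚ)+1) * m.factorial ≠ 0 from mul_ne_zero hm1 hm0)]
      push_cast at hkey2 ⊢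
      linear_combination hkey2

/-- `Σ [binom(2h_{k+1},h_{k+1})⋯binom(2h_{k+b},h_{k+b})]/[h_1⋯h_k·4^{h_{k+1}+⋯+h_{k+b}}]
 = (k!/n!)·c_{b/2}(n+b/2, k+b/2)`, the sum being over `h_1,…,h_k ≥ 1`,
`h_{k+1},…,h_{k+b} ≥ 0` with `h_1+⋯+h_{k+b} = n`, where
`c_{b/2}(n+b/2,k+b/2) = Σ_{m=0}^{n−k} binom(n,m) c(n−m,k) (b/2)^{(m)}`. -/
theorem sum_compositions_eq_halfIntStirling1 (n k b : ℕ) (hb : 1 ≤ b) (hk : 1 ≤ k)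
    (hkn : k ≤ n) :
    (∑ h ∈ (Finset.Nat.antidiagonalTuple (k + b) n).filter
        (fun h => ∀ i : Fin (k + b), (i : ℕ) < k → 0 < h i),
      ∏ i : Fin (k + b),
        (if (i : ℕ) < k then ((h i : ℚ))⁻¹
          else ((2 * h i).choose (h i) : ℚ) / 4 ^ h i)) =
      (k.factorial : ℚ) / (n.factorial : ℚ) *
        ∑ m ∈ Finset.range (n - k + 1),
          (n.choose m : ℚ) * (stirling1 (n - m) k : ℚ) *
            ∏ i ∈ Finset.range m, ((b : ℚ) / 2 + i) := by
  classical
  -- Step 1: drop the filter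
  have step1 : (∑ h ∈ (Finset.Nat.antidiagonalTuple (k + b) n).filter
        (fun h => ∀ i : Fin (k + b), (i : ℕ) < k → 0 < h i),
      ∏ i : Fin (k + b),
        (if (i : ℕ) < k then ((h i : ℚ))⁻¹
          else ((2 * h i).choose (h i) : ℚ) / 4 ^ h i)) =
      ∑ h ∈ Finset.Nat.antidiagonalTuple (k + b) n,
      ∏ i : Fin (k + b),
        (if (i : ℕ) < k then ((h i : ℚ))⁻¹
          else ((2 * h i).choose (h i) : ℚ) / 4 ^ h i) := by
    apply Finset.sum_subset (Finset.filter_subset _ _)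
    intro h hmem hnot
    simp only [Finset.mem_filter, hmem, true_and, not_forall] at hnot
    obtain ⟨i, hik, hi0⟩ := hnot
    refine Finset.prod_eq_zero (Finset.mem_univ i) ?_
    rw [if_pos hik, Nat.eq_zero_of_not_pos hi0]
    simp
  rw [step1]
  -- Step 2: identify with a power-series coefficient
  have step2 : (∑ h ∈ Finset.Nat.antidiagonalTuple (k + b) n,
      ∏ i : Fin (k + b),
        (if (i : ℕ) < k then ((h i : ℚ))⁻¹
          else ((2 * h i).choose (h i) : ℚ) / 4 ^ h i)) =
      PowerSeries.coeff n (Lser ^ k * Gser ^ b) := by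
    have hprod : Lser ^ k * Gser ^ b
        = ∏ i : Fin (k + b), (if (i : ℕ) < k then Lser else Gser) := by
      rw [Fin.prod_univ_add (f := fun i : Fin (k + b) => if (i : ℕ) < k then Lser else Gser)]
      congr 1
      · rw [Finset.prod_congr rfl (fun i _ => if_pos (by simp [i.isLt]))]
        simp
      · rw [Finset.prod_congr rfl (fun i _ => if_neg (by simp))]
        simp
    rw [hprod, PowerSeries.coeff_prod]
    refine Finset.sum_equiv Finsupp.equivFunOnFinite.symm ?_ ?_
    · intro h
      simp only [Finset.Nat.mem_antidiagonalTuple, Finset.mem_finsuppAntidiag]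
      constructor
      · intro hs
        refine ⟨?_, Finset.subset_univ _⟩
        simpa [Finsupp.equivFunOnFinite] using hs
      · intro ⟨hs, _⟩
        simpa [Finsupp.equivFunOnFinite] using hs
    · intro h _
      apply Finset.prod_congr rfl
      intro i _
      have happ : (Finsupp.equivFunOnFinite.symm h) i = h i := by
        simp [Finsupp.equivFunOnFinite]
      rw [happ, apply_ite (PowerSeries.coeff (h i))]
      simp [Lser, Gser]
  rw [step2, PowerSeries.coeff_mul, Finset.Nat.sum_antidiagonal_eq_sum_range_succ_mk]
  simp only [coeff_Lpow, coeff_Gpow]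
  -- Right-hand side: extend the summation range and reflect
  have hext : (∑ m ∈ Finset.range (n - k + 1),
        (n.choose m : ℚ) * (stirling1 (n - m) k : ℚ) * ∏ i ∈ Finset.range m, ((b : ℚ) / 2 + i))
      = ∑ m ∈ Finset.range (n + 1),
        (n.choose m : ℚ) * (stirling1 (n - m) k : ℚ) * ∏ i ∈ Finset.range m, ((b : ℚ) / 2 + i) := by
    apply Finset.sum_subset
    · intro m hm
      simp only [Finset.mem_range] at hm ⊢
      omega
    · intro m hm hnm
      simp only [Finset.mem_range] at hm hnm
      rw [stirling1_eq_zero_of_lt (show n - m < k by omega)]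
      push_cast; ring
  rw [hext, ← Finset.sum_range_reflect, Finset.mul_sum]
  apply Finset.sum_congr rfl
  intro i hi
  have hin : i ≤ n := by simp only [Finset.mem_range] at hi; omega
  simp only [Nat.succ_sub_one]
  rw [Nat.sub_sub_self hin, Nat.cast_choose ℚ hin]
  have h1 : (i.factorial : ℚ) ≠ 0 := by positivity
  have h2 : ((n - i).factorial : ℚ) ≠ 0 := by positivity
  have h3 : (n.factorial : ℚ) ≠ 0 := by positivity
  field_simp
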